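/- Let ψ, φ, ψ^H, φ^H : ℝ → ℝ be integrable functions whose Fourier transforms (ψ̂(ω) = ∫_ℝ ψ(t) e^{-iωt} dt, etc.) satisfy ψ̂^H(ω) = −i·sign(ω)·ψ̂(ω) and φ̂^H(ω) = −i·sign(ω)·φ̂(ω) for every ω ≠ 0. Define Ψ^a : ℝ² → ℝ by Ψ^a(x, y) = (1/2)(ψ(x)φ(y) − ψ^H(x)φ^H(y)), and let Ψ̂^a(ω_x, ω_y) = ∫_{ℝ²} Ψ^a(x, y) e^{-i(ω_x x + ω_y y)} dx dy be its two-dimensional Fourier transform. Then for all (ω_x, ω_y) with ω_x ≠ 0 and ω_y ≠ 0: Ψ̂^a(ω_x, ω_y) = ψ̂(ω_x)·φ̂(ω_y) if sign(ω_x) = sign(ω_y), and Ψ̂^a(ω_x, ω_y) = 0 if sign(ω_x) ≠ sign(ω_y). -/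

import Mathlib

open Real MeasureTheory

lemma fourier_integrand_integrable (f : ℝ → ℝ) (hf : Integrable f) (ω : ℝ) :
    Integrable (fun t : ℝ => (f t : ℂ) * Complex.exp (-((ω * t : ℝ) : ℂ) * Complex.I)) := by
  have h1 : Integrable (fun t : ℝ =>
      Complex.exp (-((ω * t : ℝ) : ℂ) * Complex.I) * (f t : ℂ)) := by
    refine hf.ofReal.bdd_mul (c := 1) ?_ (Filter.Eventually.of_forall fun t => ?_)
    · exact (Complex.continuous_exp.comp (by continuity)).aestronglyMeasurable
    · simp [Complex.norm_exp]
  exact h1.congr (Filter.Eventually.of_forall fun t => mul_comm _ _)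

theorem stmt_11 (ψ φ ψH φH : ℝ → ℝ)
    (hψ : Integrable ψ) (hφ : Integrable φ)
    (hψH : Integrable ψH) (hφH : Integrable φH)
    (hHψ : ∀ ω : ℝ, ω ≠ 0 →
      (∫ t : ℝ, (ψH t : ℂ) * Complex.exp (-((ω * t : ℝ) : ℂ) * Complex.I))
        = -Complex.I * (Real.sign ω : ℂ) *
            ∫ t : ℝ, (ψ t : ℂ) * Complex.exp (-((ω * t : ℝ) : ℂ) * Complex.I))
    (hHφ : ∀ ω : ℝ, ω ≠ 0 →
      (∫ t : ℝ, (φH t : ℂ) * Complex.exp (-((ω * t : ℝ) : ℂ) * Complex.I))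
        = -Complex.I * (Real.sign ω : ℂ) *
            ∫ t : ℝ, (φ t : ℂ) * Complex.exp (-((ω * t : ℝ) : ℂ) * Complex.I)) :
    ∀ ωx ωy : ℝ, ωx ≠ 0 → ωy ≠ 0 →
      (∫ p : ℝ × ℝ,
          ((1 / 2 * (ψ p.1 * φ p.2 - ψH p.1 * φH p.2) : ℝ) : ℂ) *
            Complex.exp (-((ωx * p.1 + ωy * p.2 : ℝ) : ℂ) * Complex.I))
        = if Real.sign ωx = Real.sign ωy
          then (∫ t : ℝ, (ψ t : ℂ) * Complex.exp (-((ωx * t : ℝ) : ℂ) * Complex.I)) *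
               (∫ t : ℝ, (φ t : ℂ) * Complex.exp (-((ωy * t : ℝ) : ℂ) * Complex.I))
          else 0 := by
  intro ωx ωy hx hy
  set F1 : ℝ → ℂ := fun t => (ψ t : ℂ) * Complex.exp (-((ωx * t : ℝ) : ℂ) * Complex.I) with hF1
  set F2 : ℝ → ℂ := fun t => (φ t : ℂ) * Complex.exp (-((ωy * t : ℝ) : ℂ) * Complex.I) with hF2
  set G1 : ℝ → ℂ := fun t => (ψH t : ℂ) * Complex.exp (-((ωx * t : ℝ) : ℂ) * Complex.I) with hG1
  set G2 : ℝ → ℂ := fun t => (φH t : ℂ) * Complex.exp (-((ωy * t : ℝ) : ℂ) * Complex.I) with hG2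
  have hiF1 := fourier_integrand_integrable ψ hψ ωx
  have hiF2 := fourier_integrand_integrable φ hφ ωy
  have hiG1 := fourier_integrand_integrable ψH hψH ωx
  have hiG2 := fourier_integrand_integrable φH hφH ωy
  have hsplit : ∀ p : ℝ × ℝ,
      ((1 / 2 * (ψ p.1 * φ p.2 - ψH p.1 * φH p.2) : ℝ) : ℂ) *
        Complex.exp (-((ωx * p.1 + ωy * p.2 : ℝ) : ℂ) * Complex.I)
      = (1 / 2 : ℂ) * (F1 p.1 * F2 p.2 - G1 p.1 * G2 p.2) := by
    intro p
    simp only [hF1, hF2, hG1, hG2]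
    push_cast
    rw [show -((ωx : ℂ) * p.1 + ωy * p.2) * Complex.I
        = -((ωx : ℂ) * p.1) * Complex.I + -((ωy : ℂ) * p.2) * Complex.I by ring,
      Complex.exp_add]
    ring
  rw [integral_congr_ae (Filter.Eventually.of_forall hsplit)]
  rw [Measure.volume_eq_prod]
  rw [integral_const_mul, integral_sub (hiF1.mul_prod hiF2) (hiG1.mul_prod hiG2),
    integral_prod_mul F1 F2, integral_prod_mul G1 G2]
  have hGint : (∫ t, G1 t) * (∫ t, G2 t)
      = -((Real.sign ωx : ℂ) * (Real.sign ωy : ℂ)) * ((∫ t, F1 t) * (∫ t, F2 t)) := by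
    rw [hG1, hG2, hHψ ωx hx, hHφ ωy hy]
    simp only [← hF1, ← hF2]
    have := Complex.I_sq
    ring_nf
    rw [Complex.I_sq]
    ring
  rw [hGint]
  rcases hx.lt_or_gt with h1 | h1 <;> rcases hy.lt_or_gt with h2 | h2 <;>
    simp [Real.sign_of_neg, Real.sign_of_pos, h1, h2] <;> norm_num <;> ring
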